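/- arXiv:2106.15215 — 4 statements merged into one kernel-verified Lean document; each statement's English description precedes it below -/
import Mathlib

section
/- Let g : [0,∞) → (0,∞) be continuous with r^{d+α} g(r) → C as r → ∞ for some constant C > 0. For β > 0 define w_β(r) = ∫_0^∞ e^{-βt} t^{-d/α} g(r t^{-1/α}) dt. Then r^{d+α} w_β(r) → C/β² as r → ∞. -/
open MeasureTheory Filter Real Set

theorem stmt_0 (d : ℕ) (hd : 1 ≤ d) (α : ℝ) (hα : 0 < α) (hα2 : α < 2)
    (β : ℝ) (hβ : 0 < β) (C : ℝ) (hC : 0 < C)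
    (g : ℝ → ℝ) (hg : Continuous g) (hgpos : ∀ r, 0 ≤ r → 0 < g r)
    (hglim : Tendsto (fun r : ℝ => r ^ ((d : ℝ) + α) * g r) atTop (nhds C)) :
    Tendsto
      (fun r : ℝ =>
        r ^ ((d : ℝ) + α) *
          ∫ t in Ioi (0 : ℝ), Real.exp (-β * t) * t ^ (-(d : ℝ) / α) * g (r * t ^ (-(1 / α))))
      atTop (nhds (C / β ^ 2)) := by
  have hdα : (0 : ℝ) < (d : ℝ) + α := by positivity
  set h : ℝ → ℝ := fun s => s ^ ((d : ℝ) + α) * g s with hh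
  have hcont : Continuous h :=
    (Real.continuous_rpow_const hdα.le).mul hg
  have hhlim : Tendsto h atTop (nhds C) := hglim
  -- boundedness of h on [0, ∞)
  obtain ⟨A, hA⟩ : ∃ A : ℝ, ∀ s ≥ A, |h s - C| ≤ 1 := by
    have := (Metric.tendsto_atTop.1 hhlim) 1 one_pos
    obtain ⟨A, hA⟩ := this
    exact ⟨A, fun s hs => le_of_lt (by simpa [Real.dist_eq] using hA s hs)⟩
  obtain ⟨M₁, hM₁⟩ : ∃ M₁, ∀ x ∈ Icc (0 : ℝ) (max A 0), ‖h x‖ ≤ M₁ :=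
    (isCompact_Icc).exists_bound_of_continuousOn hcont.continuousOn
  set M : ℝ := max M₁ (|C| + 1) with hM
  have hMbound : ∀ s : ℝ, 0 ≤ s → |h s| ≤ M := by
    intro s hs
    rcases le_or_gt s (max A 0) with hle | hgt
    · exact le_trans (hM₁ s ⟨hs, hle⟩) (le_max_left _ _)
    · have : |h s - C| ≤ 1 := hA s (le_trans (le_max_left _ _) hgt.le)
      calc |h s| = |(h s - C) + C| := by ring_nf
        _ ≤ |h s - C| + |C| := abs_add_le _ _
        _ ≤ 1 + |C| := by linarith
        _ ≤ M := by rw [hM]; simp [add_comm]; 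
    
  -- the key dominated convergence step
  have hbound_int : Integrable (fun t : ℝ => M * (Real.exp (-β * t) * t))
      (volume.restrict (Ioi (0 : ℝ))) := by
    have := integrableOn_rpow_mul_exp_neg_mul_rpow (p := 1) (s := 1) (b := β)
      (by norm_num) one_pos hβ
    have h2 : IntegrableOn (fun t : ℝ => Real.exp (-β * t) * t) (Ioi 0) := by
      refine this.congr_fun (fun x hx => ?_) measurableSet_Ioi
      simp only [Real.rpow_one]
      ring
    exact h2.const_mul M
  have key : Tendsto (fun r : ℝ => ∫ t in Ioi (0 : ℝ),
      Real.exp (-β * t) * t * h (r * t ^ (-(1 / α)))) atTop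
      (nhds (∫ t in Ioi (0 : ℝ), Real.exp (-β * t) * t * C)) := by
    refine tendsto_integral_filter_of_dominated_convergence
      (fun t => M * (Real.exp (-β * t) * t)) ?_ ?_ hbound_int ?_
    · -- a.e. strong measurability
      filter_upwards with r
      apply ContinuousOn.aestronglyMeasurable _ measurableSet_Ioi
      apply ContinuousOn.mul
      · exact ((Real.continuous_exp.comp (continuous_const.mul continuous_id)).mul
          continuous_id).continuousOn
      · intro t ht
        exact (hcont.continuousAt.comp_continuousWithinAt
          ((continuousWithinAt_const.mul
            ((Real.continuousAt_rpow_const t _ (Or.inl (ne_of_gt ht))).continuousWithinAt))))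
    · -- the bound
      filter_upwards [eventually_ge_atTop (0 : ℝ)] with r hr
      refine (ae_restrict_iff' measurableSet_Ioi).2 ?_
      filter_upwards with t ht
      have ht0 : (0 : ℝ) < t := ht
      have hx : 0 ≤ r * t ^ (-(1 / α)) := by positivity
      have h1 : ‖Real.exp (-β * t) * t * h (r * t ^ (-(1 / α)))‖
          = (Real.exp (-β * t) * t) * |h (r * t ^ (-(1 / α)))| := by
        rw [Real.norm_eq_abs, abs_mul, abs_of_pos (by positivity : (0:ℝ) < Real.exp (-β*t) * t)]
      rw [h1, mul_comm M]
      exact mul_le_mul_of_nonneg_left (hMbound _ hx) (by positivity)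
    · -- pointwise limit
      refine (ae_restrict_iff' measurableSet_Ioi).2 ?_
      filter_upwards with t ht
      have ht0 : (0 : ℝ) < t := ht
      have hpt : Tendsto (fun r : ℝ => r * t ^ (-(1 / α))) atTop atTop :=
        Tendsto.atTop_mul_const (Real.rpow_pos_of_pos ht0 _) tendsto_id
      exact Tendsto.const_mul _ (hhlim.comp hpt)
  -- rewrite the original function eventually
  have hev : (fun r : ℝ => r ^ ((d : ℝ) + α) *
        ∫ t in Ioi (0 : ℝ), Real.exp (-β * t) * t ^ (-(d : ℝ) / α) * g (r * t ^ (-(1 / α))))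
      =ᶠ[atTop] (fun r : ℝ => ∫ t in Ioi (0 : ℝ),
        Real.exp (-β * t) * t * h (r * t ^ (-(1 / α)))) := by
    filter_upwards [eventually_gt_atTop (0 : ℝ)] with r hr
    rw [← integral_const_mul]
    refine setIntegral_congr_fun measurableSet_Ioi (fun t ht => ?_)
    have ht0 : (0 : ℝ) < t := ht
    have e1 : (r * t ^ (-(1 / α))) ^ ((d : ℝ) + α)
        = r ^ ((d : ℝ) + α) * t ^ ((-(1 / α)) * ((d : ℝ) + α)) := by
      rw [Real.mul_rpow hr.le (Real.rpow_nonneg ht0.le _), ← Real.rpow_mul ht0.le]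
    have e2 : t ^ (-(d : ℝ) / α) = t * t ^ ((-(1 / α)) * ((d : ℝ) + α)) := by
      rw [show t * t ^ ((-(1 / α)) * ((d : ℝ) + α))
          = t ^ (1 + (-(1 / α)) * ((d : ℝ) + α)) by
        rw [Real.rpow_add ht0, Real.rpow_one]]
      congr 1
      field_simp
      ring
    simp only [hh]
    rw [e1, e2]
    ring
  -- compute the limit integral
  have hval : (∫ t in Ioi (0 : ℝ), Real.exp (-β * t) * t * C) = C / β ^ 2 := by
    have hfn : (fun t : ℝ => Real.exp (-β * t) * t * C)
        = fun t : ℝ => C * (t ^ ((2 : ℝ) - 1) * Real.exp (-(β * t))) := by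
      funext t
      rw [show (2 : ℝ) - 1 = 1 by norm_num, Real.rpow_one, neg_mul]
      ring
    rw [hfn, integral_const_mul, integral_rpow_mul_exp_neg_mul_Ioi two_pos hβ,
      Real.Gamma_two, mul_one]
    rw [show ((1 : ℝ) / β) ^ (2 : ℝ) = 1 / β ^ 2 by
      rw [show (2 : ℝ) = ((2 : ℕ) : ℝ) by norm_num, Real.rpow_natCast, div_pow, one_pow]]
    ring
  rw [← hval]
  exact Tendsto.congr' hev.symm key
end

section
/- Let d > α > 0, and let g : [0,∞) → (0,∞) be continuous, bounded, and satisfy r^{d+α} g(r) → C as r → ∞ for some C > 0 (which ensures ∫_0^∞ s^{d-α-1} g(s) ds < ∞). For β > 0 define w_β(r) = ∫_0^∞ e^{-βt} t^{-d/α} g(r t^{-1/α}) dt. Then r^{d-α} w_β(r) → α ∫_0^∞ s^{d-α-1} g(s) ds as r → 0⁺. -/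
open MeasureTheory Filter Real Set
open Topology


private lemma stmt2_intg (d : ℕ) (α : ℝ) (hα : 0 < α) (hdα : α < (d : ℝ))
    (C : ℝ) (g : ℝ → ℝ) (hg : Continuous g) (hgpos : ∀ r, 0 ≤ r → 0 < g r)
    (hgbd : ∃ B : ℝ, ∀ r, 0 ≤ r → g r ≤ B)
    (hglim : Tendsto (fun r : ℝ => r ^ ((d : ℝ) + α) * g r) atTop (nhds C)) :
    IntegrableOn (fun u : ℝ => u ^ ((d : ℝ) - α - 1) * g u) (Ioi 0) := by
  obtain ⟨B, hB⟩ := hgbd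
  have hev : ∀ᶠ u in atTop, u ^ ((d : ℝ) + α) * g u ≤ C + 1 :=
    hglim.eventually (eventually_le_nhds (lt_add_one C))
  obtain ⟨M₀, hM₀⟩ := eventually_atTop.mp hev
  set M : ℝ := max M₀ 1 with hMdef
  have hM1 : (1 : ℝ) ≤ M := le_max_right _ _
  have hM0 : (0 : ℝ) < M := lt_of_lt_of_le one_pos hM1
  have hcont : ContinuousOn (fun u : ℝ => u ^ ((d : ℝ) - α - 1) * g u) (Ioi 0) := by
    apply ContinuousOn.mul _ hg.continuousOn
    intro x hx
    exact (Real.continuousAt_rpow_const x _ (Or.inl (ne_of_gt hx))).continuousWithinAt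
  have hmeas : AEStronglyMeasurable (fun u : ℝ => u ^ ((d : ℝ) - α - 1) * g u)
      (volume.restrict (Ioi (0:ℝ))) :=
    hcont.aestronglyMeasurable measurableSet_Ioi
  have h1 : IntegrableOn (fun u : ℝ => u ^ ((d : ℝ) - α - 1) * g u) (Ioc 0 M) := by
    have hint : IntegrableOn (fun u : ℝ => B * u ^ ((d : ℝ) - α - 1)) (Ioc 0 M) := by
      have := (intervalIntegral.intervalIntegrable_rpow' (a := (0:ℝ)) (b := M)
        (r := (d : ℝ) - α - 1) (by linarith)).1
      exact this.const_mul B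
    refine hint.mono' (hmeas.mono_measure (Measure.restrict_mono Ioc_subset_Ioi_self le_rfl)) ?_
    rw [ae_restrict_iff' measurableSet_Ioc]
    filter_upwards with u hu
    have hu0 : 0 < u := hu.1
    rw [norm_mul, norm_of_nonneg (rpow_nonneg hu0.le _), norm_of_nonneg (hgpos u hu0.le).le]
    have : g u ≤ B := hB u hu0.le
    have hp : (0:ℝ) ≤ u ^ ((d : ℝ) - α - 1) := rpow_nonneg hu0.le _
    nlinarith
  have h2 : IntegrableOn (fun u : ℝ => u ^ ((d : ℝ) - α - 1) * g u) (Ioi M) := by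
    have hint : IntegrableOn (fun u : ℝ => (C + 1) * u ^ (-1 - 2 * α)) (Ioi M) :=
      (integrableOn_Ioi_rpow_of_lt (by linarith) hM0).const_mul _
    refine hint.mono'
      (hmeas.mono_measure (Measure.restrict_mono (Ioi_subset_Ioi hM0.le) le_rfl)) ?_
    rw [ae_restrict_iff' measurableSet_Ioi]
    filter_upwards with u hu
    have hu0 : 0 < u := lt_trans hM0 hu
    have hpow : 0 < u ^ ((d : ℝ) + α) := rpow_pos_of_pos hu0 _
    have hle : u ^ ((d : ℝ) + α) * g u ≤ C + 1 :=
      hM₀ u (le_trans (le_max_left _ _) (le_of_lt hu))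
    have hgu : g u ≤ (C + 1) / u ^ ((d : ℝ) + α) := by
      rw [le_div_iff₀ hpow]; linarith [hle]
    rw [norm_mul, norm_of_nonneg (rpow_nonneg hu0.le _), norm_of_nonneg (hgpos u hu0.le).le]
    have hkey : u ^ ((d : ℝ) - α - 1) * ((C + 1) / u ^ ((d : ℝ) + α))
        = (C + 1) * u ^ (-1 - 2 * α) := by
      rw [mul_div_assoc', mul_comm, mul_div_assoc, ← rpow_sub hu0]
      ring_nf
    calc u ^ ((d : ℝ) - α - 1) * g u
        ≤ u ^ ((d : ℝ) - α - 1) * ((C + 1) / u ^ ((d : ℝ) + α)) :=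
          mul_le_mul_of_nonneg_left hgu (rpow_nonneg hu0.le _)
      _ = (C + 1) * u ^ (-1 - 2 * α) := hkey
  have : Ioc (0:ℝ) M ∪ Ioi M = Ioi 0 := Ioc_union_Ioi_eq_Ioi hM0.le
  rw [← this]
  exact h1.union h2


private lemma stmt2_cov (d : ℕ) (α : ℝ) (hα : 0 < α) (β : ℝ) (g : ℝ → ℝ) (r : ℝ) (hr : 0 < r) :
    r ^ ((d : ℝ) - α) *
        ∫ t in Ioi (0 : ℝ), Real.exp (-β * t) * t ^ (-(d : ℝ) / α) * g (r * t ^ (-(1 / α)))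
      = α * ∫ u in Ioi (0 : ℝ),
          Real.exp (-β * (r ^ α * u ^ (-α))) * (u ^ ((d : ℝ) - α - 1) * g u) := by
  have hαne : α ≠ 0 := hα.ne'
  set F : ℝ → ℝ := fun t => Real.exp (-β * t) * t ^ (-(d : ℝ) / α) * g (r * t ^ (-(1 / α)))
    with hF
  set H : ℝ → ℝ := fun u =>
    α * ((r⁻¹ * u) ^ ((d : ℝ) - α - 1) * (Real.exp (-β * ((r⁻¹ * u) ^ (-α))) * g u)) with hH
  have step1 : (∫ t in Ioi (0:ℝ), F t)
      = ∫ x in Ioi (0:ℝ), (|(-α)| * x ^ ((-α) - 1)) • F (x ^ (-α)) :=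
    (integral_comp_rpow_Ioi F (neg_ne_zero.mpr hαne)).symm
  have step2 : (∫ x in Ioi (0:ℝ), (|(-α)| * x ^ ((-α) - 1)) • F (x ^ (-α)))
      = ∫ x in Ioi (0:ℝ), H (r * x) := by
    refine setIntegral_congr_fun measurableSet_Ioi ?_
    intro x hx
    have hx0 : (0:ℝ) < x := hx
    have e1 : (x ^ (-α)) ^ (-(d : ℝ) / α) = x ^ (d : ℝ) := by
      rw [← Real.rpow_mul hx0.le]
      congr 1
      field_simp
    have e2 : (x ^ (-α)) ^ (-(1 / α)) = x := by
      rw [← Real.rpow_mul hx0.le]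
      rw [show -α * -(1/α) = 1 by field_simp]
      exact Real.rpow_one x
    have e3 : r⁻¹ * (r * x) = x := inv_mul_cancel_left₀ hr.ne' x
    simp only [hF, hH, smul_eq_mul, e1, e2, e3]
    rw [abs_neg, abs_of_pos hα]
    have e4 : x ^ (-α - 1) * x ^ (d : ℝ) = x ^ ((d : ℝ) - α - 1) := by
      rw [← Real.rpow_add hx0]; ring_nf
    calc α * x ^ (-α - 1) * (Real.exp (-β * x ^ (-α)) * x ^ (d : ℝ) * g (r * x))
        = α * ((x ^ (-α - 1) * x ^ (d : ℝ)) * (Real.exp (-β * x ^ (-α)) * g (r * x))) := by ring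
      _ = α * (x ^ ((d : ℝ) - α - 1) * (Real.exp (-β * x ^ (-α)) * g (r * x))) := by rw [e4]
  have step3 : (∫ x in Ioi (0:ℝ), H (r * x)) = r⁻¹ • ∫ u in Ioi (0:ℝ), H u := by
    have := integral_comp_mul_left_Ioi H 0 hr
    simpa using this
  have step4 : (∫ u in Ioi (0:ℝ), H u)
      = (α * r ^ (α + 1 - (d : ℝ))) *
          ∫ u in Ioi (0:ℝ), Real.exp (-β * (r ^ α * u ^ (-α))) * (u ^ ((d : ℝ) - α - 1) * g u)
      := by
    rw [← integral_const_mul]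
    refine setIntegral_congr_fun measurableSet_Ioi ?_
    intro u hu
    have hu0 : (0:ℝ) < u := hu
    have e5 : (r⁻¹ * u) ^ ((d : ℝ) - α - 1)
        = r ^ (α + 1 - (d : ℝ)) * u ^ ((d : ℝ) - α - 1) := by
      rw [Real.mul_rpow (inv_nonneg.mpr hr.le) hu0.le, Real.inv_rpow hr.le,
        ← Real.rpow_neg hr.le]
      ring_nf
    have e6 : (r⁻¹ * u) ^ (-α) = r ^ α * u ^ (-α) := by
      rw [Real.mul_rpow (inv_nonneg.mpr hr.le) hu0.le, Real.inv_rpow hr.le,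
        ← Real.rpow_neg hr.le, neg_neg]
    simp only [hH, e5, e6]
    ring
  rw [step1, step2, step3, step4, smul_eq_mul]
  have hone : r ^ ((d : ℝ) - α) * (r⁻¹ * r ^ (α + 1 - (d : ℝ))) = 1 := by
    rw [← Real.rpow_neg_one r, ← Real.rpow_add hr, ← Real.rpow_add hr,
      show ((d:ℝ) - α + (-1 + (α + 1 - (d:ℝ)))) = 0 by ring, Real.rpow_zero]
  calc r ^ ((d : ℝ) - α) * (r⁻¹ * (α * r ^ (α + 1 - (d : ℝ)) *
          ∫ u in Ioi (0:ℝ), Real.exp (-β * (r ^ α * u ^ (-α))) * (u ^ ((d : ℝ) - α - 1) * g u)))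
      = (r ^ ((d : ℝ) - α) * (r⁻¹ * r ^ (α + 1 - (d : ℝ)))) * (α *
          ∫ u in Ioi (0:ℝ), Real.exp (-β * (r ^ α * u ^ (-α))) * (u ^ ((d : ℝ) - α - 1) * g u))
        := by ring
    _ = α * ∫ u in Ioi (0:ℝ),
          Real.exp (-β * (r ^ α * u ^ (-α))) * (u ^ ((d : ℝ) - α - 1) * g u) := by
        rw [hone, one_mul]


private lemma stmt2_main (d : ℕ) (hd : 1 ≤ d) (α : ℝ) (hα : 0 < α) (hα2 : α < 2)
    (hdα : α < (d : ℝ)) (β : ℝ) (hβ : 0 < β) (C : ℝ) (hC : 0 < C)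
    (g : ℝ → ℝ) (hg : Continuous g) (hgpos : ∀ r, 0 ≤ r → 0 < g r)
    (hgbd : ∃ B : ℝ, ∀ r, 0 ≤ r → g r ≤ B)
    (hglim : Tendsto (fun r : ℝ => r ^ ((d : ℝ) + α) * g r) atTop (nhds C))
    (hI : IntegrableOn (fun u : ℝ => u ^ ((d : ℝ) - α - 1) * g u) (Ioi 0))
    (cov : ∀ r : ℝ, 0 < r → r ^ ((d : ℝ) - α) *
        (∫ t in Ioi (0 : ℝ), Real.exp (-β * t) * t ^ (-(d : ℝ) / α) * g (r * t ^ (-(1 / α))))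
      = α * ∫ u in Ioi (0 : ℝ),
          Real.exp (-β * (r ^ α * u ^ (-α))) * (u ^ ((d : ℝ) - α - 1) * g u)) :
    Tendsto
      (fun r : ℝ =>
        r ^ ((d : ℝ) - α) *
          ∫ t in Ioi (0 : ℝ), Real.exp (-β * t) * t ^ (-(d : ℝ) / α) * g (r * t ^ (-(1 / α))))
      (nhdsWithin 0 (Ioi 0))
      (nhds (α * ∫ s in Ioi (0 : ℝ), s ^ ((d : ℝ) - α - 1) * g s)) := by
  set l := nhdsWithin (0:ℝ) (Ioi 0) with hl
  have hcontOn : ∀ c : ℝ, ContinuousOn (fun u : ℝ => u ^ c) (Ioi 0) := fun c x hx =>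
    (Real.continuousAt_rpow_const x c (Or.inl (ne_of_gt hx))).continuousWithinAt
  have hDCT : Tendsto
      (fun r : ℝ => ∫ u in Ioi (0:ℝ),
        Real.exp (-β * (r ^ α * u ^ (-α))) * (u ^ ((d : ℝ) - α - 1) * g u)) l
      (𝓝 (∫ s in Ioi (0:ℝ), s ^ ((d : ℝ) - α - 1) * g s)) := by
    apply tendsto_integral_filter_of_dominated_convergence
      (fun u : ℝ => u ^ ((d : ℝ) - α - 1) * g u)
    · filter_upwards with r
      apply ContinuousOn.aestronglyMeasurable _ measurableSet_Ioi
      exact ((Real.continuous_exp.comp_continuousOn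
        (continuousOn_const.mul (continuousOn_const.mul (hcontOn (-α))))).mul
        ((hcontOn _).mul hg.continuousOn))
    · filter_upwards [self_mem_nhdsWithin] with r hr
      rw [ae_restrict_iff' measurableSet_Ioi]
      filter_upwards with u hu
      have hu0 : (0:ℝ) < u := hu
      have hexp : Real.exp (-β * (r ^ α * u ^ (-α))) ≤ 1 := by
        rw [Real.exp_le_one_iff]
        have h1 : (0:ℝ) < r ^ α := rpow_pos_of_pos hr _
        have h2 : (0:ℝ) < u ^ (-α) := rpow_pos_of_pos hu0 _
        nlinarith [mul_pos h1 h2, mul_pos hβ (mul_pos h1 h2)]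
      rw [norm_mul, Real.norm_eq_abs, abs_of_pos (Real.exp_pos _),
        norm_of_nonneg (mul_nonneg (rpow_nonneg hu0.le _) (hgpos u hu0.le).le)]
      have hb0 : (0:ℝ) ≤ u ^ ((d : ℝ) - α - 1) * g u :=
        mul_nonneg (rpow_nonneg hu0.le _) (hgpos u hu0.le).le
      nlinarith [Real.exp_pos (-β * (r ^ α * u ^ (-α)))]
    · exact hI
    · rw [ae_restrict_iff' measurableSet_Ioi]
      filter_upwards with u hu
      have hu0 : (0:ℝ) < u := hu
      have h0 : Tendsto (fun r : ℝ => r ^ α) l (𝓝 0) := by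
        have := (Real.continuousAt_rpow_const 0 α (Or.inr hα.le)).tendsto
        rw [Real.zero_rpow hα.ne'] at this
        exact this.mono_left nhdsWithin_le_nhds
      have h1 : Tendsto (fun r : ℝ => -β * (r ^ α * u ^ (-α))) l (𝓝 0) := by
        have := ((h0.mul_const (u ^ (-α))).const_mul (-β))
        simpa using this
      have h2 : Tendsto (fun r : ℝ => Real.exp (-β * (r ^ α * u ^ (-α)))) l (𝓝 1) := by
        have := (Real.continuous_exp.tendsto 0).comp h1
        simpa [Function.comp_def] using this
      have := h2.mul_const (u ^ ((d : ℝ) - α - 1) * g u)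
      simpa using this
  refine Tendsto.congr' ?_ (hDCT.const_mul α)
  filter_upwards [self_mem_nhdsWithin] with r hr
  exact (cov r hr).symm

theorem stmt_2 (d : ℕ) (hd : 1 ≤ d) (α : ℝ) (hα : 0 < α) (hα2 : α < 2)
    (hdα : α < (d : ℝ)) (β : ℝ) (hβ : 0 < β) (C : ℝ) (hC : 0 < C)
    (g : ℝ → ℝ) (hg : Continuous g) (hgpos : ∀ r, 0 ≤ r → 0 < g r)
    (hgbd : ∃ B : ℝ, ∀ r, 0 ≤ r → g r ≤ B)
    (hglim : Tendsto (fun r : ℝ => r ^ ((d : ℝ) + α) * g r) atTop (nhds C)) :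
    Tendsto
      (fun r : ℝ =>
        r ^ ((d : ℝ) - α) *
          ∫ t in Ioi (0 : ℝ), Real.exp (-β * t) * t ^ (-(d : ℝ) / α) * g (r * t ^ (-(1 / α))))
      (nhdsWithin 0 (Ioi 0))
      (nhds (α * ∫ s in Ioi (0 : ℝ), s ^ ((d : ℝ) - α - 1) * g s)) :=
  stmt2_main d hd α hα hα2 hdα β hβ C hC g hg hgpos hgbd hglim
    (stmt2_intg d α hα hdα C g hg hgpos hgbd hglim)
    (fun r hr => stmt2_cov d α hα β g r hr)
end

section
/- Let d = α = 1, and let g : [0,∞) → (0,∞) be continuous with (i) |g(0) − g(r)| ≤ c r² for all r ≥ 0 and some c > 0, and (ii) r² g(r) → C as r → ∞ for some C > 0. For β > 0 define w_β(r) = ∫_0^∞ e^{-βt} t^{-1} g(r/t) dt. Then w_β(r) / log(1/r) → g(0) as r → 0⁺. -/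
open MeasureTheory Filter Real Set

lemma aux_alg_stmt3 (c r β G t : ℝ) (ht : t ≠ 0) :
    t⁻¹ * (c * (r / t) ^ 2 + β * t * G) = β * G + c * r ^ 2 * (t ^ 3)⁻¹ := by
  field_simp
  ring

set_option maxHeartbeats 1000000

theorem stmt_3 (β : ℝ) (hβ : 0 < β) (c C : ℝ) (hc : 0 < c) (hC : 0 < C)
    (g : ℝ → ℝ) (hg : Continuous g) (hgpos : ∀ r, 0 ≤ r → 0 < g r)
    (hg0 : ∀ r, 0 ≤ r → |g 0 - g r| ≤ c * r ^ 2)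
    (hglim : Tendsto (fun r : ℝ => r ^ 2 * g r) atTop (nhds C)) :
    Tendsto
      (fun r : ℝ =>
        (∫ t in Ioi (0 : ℝ), Real.exp (-β * t) * t⁻¹ * g (r / t)) / Real.log (1 / r))
      (nhdsWithin 0 (Ioi 0)) (nhds (g 0)) := by
  set f : ℝ → ℝ → ℝ := fun r t => Real.exp (-β * t) * t⁻¹ * g (r / t) with hf
  -- bound M on [0,1]
  obtain ⟨x₀, hx₀mem, hx₀⟩ :=
    isCompact_Icc.exists_isMaxOn (nonempty_Icc.2 (zero_le_one)) hg.continuousOn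
  set M := g x₀ with hM
  have hMpos : 0 < M := hgpos x₀ hx₀mem.1
  have hMb : ∀ x : ℝ, 0 ≤ x → x ≤ 1 → g x ≤ M := fun x hx hx1 => hx₀ ⟨hx, hx1⟩
  have hg0pos : 0 < g 0 := hgpos 0 le_rfl
  -- bound K : for x ≥ 1, x^2 * g x ≤ K
  obtain ⟨A, hA⟩ : ∃ A : ℝ, ∀ x ≥ A, x ^ 2 * g x ≤ C + 1 := by
    have := hglim.eventually (eventually_le_nhds (show C < C + 1 by linarith))
    exact eventually_atTop.mp this
  obtain ⟨y₀, hy₀mem, hy₀⟩ := isCompact_Icc.exists_isMaxOn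
    (nonempty_Icc.2 (le_max_left 1 A))
    ((continuous_pow 2).mul hg).continuousOn (f := fun x : ℝ => x ^ 2 * g x)
  set K : ℝ := max (C + 1) (y₀ ^ 2 * g y₀) with hK
  have hKb : ∀ x : ℝ, 1 ≤ x → x ^ 2 * g x ≤ K := by
    intro x hx
    rcases le_or_gt (max 1 A) x with h | h
    · exact le_max_of_le_left (hA x (le_trans (le_max_right 1 A) h))
    · exact le_max_of_le_right (hy₀ ⟨hx, h.le⟩)
  have hKpos : 0 < K := lt_max_of_lt_left (by linarith)
  -- continuity
  have hcont : ∀ r : ℝ, ContinuousOn (f r) (Ioi 0) := by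
    intro r
    apply ContinuousOn.mul
    · exact ((Real.continuous_exp.comp (continuous_const.mul continuous_id)).continuousOn).mul
        (continuousOn_inv₀.mono fun x hx => ne_of_gt hx)
    · exact hg.comp_continuousOn
        (continuousOn_const.div continuousOn_id fun x hx => ne_of_gt hx)
  have hfnonneg : ∀ r t : ℝ, 0 ≤ r → t ∈ Ioi (0:ℝ) → 0 ≤ f r t := by
    intro r t hr ht
    have h1 := hgpos (r / t) (div_nonneg hr (le_of_lt ht))
    have ht0 : (0:ℝ) < t := ht
    exact mul_nonneg (mul_nonneg (Real.exp_pos _).le (inv_nonneg.2 ht0.le)) h1.le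
  -- bound on (0, r]
  have hbound1 : ∀ r : ℝ, 0 < r → ∀ t ∈ Ioc (0:ℝ) r, ‖f r t‖ ≤ K / r := by
    intro r hr t ht
    have ht0 : 0 < t := ht.1
    have htr : t ≤ r := ht.2
    have h1 : (1:ℝ) ≤ r / t := (one_le_div ht0).2 htr
    have hgb : g (r / t) ≤ K * (t / r) ^ 2 := by
      have h3 := hKb (r / t) h1
      have ht0' : t ≠ 0 := ht0.ne'
      have hr0' : r ≠ 0 := hr.ne'
      calc g (r / t) = (t / r) ^ 2 * ((r / t) ^ 2 * g (r / t)) := by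
            field_simp
        _ ≤ (t / r) ^ 2 * K := mul_le_mul_of_nonneg_left h3 (by positivity)
        _ = K * (t / r) ^ 2 := by ring
    have hexp : Real.exp (-β * t) ≤ 1 := by
      apply Real.exp_le_one_iff.2; nlinarith
    have hfle : f r t ≤ K * t / r ^ 2 := by
      have hgpos' : 0 < g (r / t) := hgpos _ (by positivity)
      calc f r t ≤ 1 * t⁻¹ * g (r / t) := by
            apply mul_le_mul_of_nonneg_right _ hgpos'.le
            exact mul_le_mul_of_nonneg_right hexp (by positivity)
        _ ≤ 1 * t⁻¹ * (K * (t / r) ^ 2) := by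
            apply mul_le_mul_of_nonneg_left hgb (by positivity)
        _ = K * t / r ^ 2 := by field_simp
    have hfle2 : f r t ≤ K / r := by
      refine hfle.trans ?_
      rw [div_le_div_iff₀ (by positivity) hr]
      nlinarith [mul_nonneg (sub_nonneg.2 (mul_le_mul_of_nonneg_left htr hKpos.le)) hr.le]
    rw [Real.norm_eq_abs, abs_of_nonneg (hfnonneg r t (by positivity) ht0)]
    exact hfle2
  have hmeas1 : ∀ r : ℝ, 0 < r → AEStronglyMeasurable (f r) (volume.restrict (Ioc (0:ℝ) r)) :=
    fun r _ => ((hcont r).mono Ioc_subset_Ioi_self).aestronglyMeasurable measurableSet_Ioc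
  have hI1 : ∀ r : ℝ, 0 < r → IntegrableOn (f r) (Ioc 0 r) := by
    intro r hr
    apply Integrable.mono' (g := fun _ => K / r)
      (integrableOn_const measure_Ioc_lt_top.ne) (hmeas1 r hr)
    filter_upwards [ae_restrict_mem measurableSet_Ioc] with t ht
    exact hbound1 r hr t ht
  -- integrability on (r, ∞)
  have hI2 : ∀ r : ℝ, 0 < r → IntegrableOn (f r) (Ioi r) := by
    intro r hr
    apply Integrable.mono' (g := fun t => (M / r) * Real.exp (-β * t))
      ((exp_neg_integrableOn_Ioi r hβ).const_mul (M / r))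
    · exact ((hcont r).mono fun t ht => lt_trans hr ht).aestronglyMeasurable measurableSet_Ioi
    · filter_upwards [ae_restrict_mem measurableSet_Ioi] with t ht
      have ht0 : 0 < t := lt_trans hr ht
      have hrt : r / t ≤ 1 := by
        rw [div_le_one ht0]; exact le_of_lt ht
      have hgb : g (r / t) ≤ M := hMb _ (by positivity) hrt
      rw [Real.norm_eq_abs, abs_of_nonneg (hfnonneg r t hr.le ht0)]
      calc f r t ≤ Real.exp (-β * t) * r⁻¹ * M := by
            apply mul_le_mul _ hgb (hgpos _ (by positivity)).le (by positivity)
            exact mul_le_mul_of_nonneg_left (by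
              exact inv_anti₀ hr (le_of_lt ht)) (Real.exp_pos _).le
        _ = M / r * Real.exp (-β * t) := by ring
  set E₃ : ℝ := ∫ t in Ioi (1:ℝ), M * Real.exp (-β * t) with hE₃
  set B : ℝ := K + (β * g 0 + c / 2) + E₃ with hB
  have key : ∀ r : ℝ, r ∈ Ioo (0:ℝ) 1 →
      |(∫ t in Ioi (0:ℝ), f r t) - g 0 * Real.log (1 / r)| ≤ B := by
    intro r hrm
    obtain ⟨hr0, hr1⟩ := hrm
    have hsplit1 : (∫ t in Ioi (0:ℝ), f r t)
        = (∫ t in Ioc 0 r, f r t) + ∫ t in Ioi r, f r t := by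
      rw [← setIntegral_union (Ioc_disjoint_Ioi le_rfl) measurableSet_Ioi (hI1 r hr0)
        (hI2 r hr0), Ioc_union_Ioi_eq_Ioi hr0.le]
    have hsplit2 : (∫ t in Ioi r, f r t)
        = (∫ t in Ioc r 1, f r t) + ∫ t in Ioi 1, f r t := by
      rw [← setIntegral_union (Ioc_disjoint_Ioi le_rfl) measurableSet_Ioi
        ((hI2 r hr0).mono_set Ioc_subset_Ioi_self)
        ((hI2 r hr0).mono_set (Ioi_subset_Ioi hr1.le)),
        Ioc_union_Ioi_eq_Ioi hr1.le]
    -- estimate 1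
    have e1 : |∫ t in Ioc (0:ℝ) r, f r t| ≤ K := by
      have := norm_setIntegral_le_of_norm_le_const (μ := volume) (s := Ioc (0:ℝ) r)
        measure_Ioc_lt_top (hbound1 r hr0)
      rw [Real.norm_eq_abs] at this
      refine this.trans ?_
      rw [measureReal_def, Real.volume_Ioc]
      rw [ENNReal.toReal_ofReal (by linarith)]
      rw [div_mul_eq_mul_div, sub_zero, mul_div_assoc, div_self hr0.ne', mul_one]
    -- estimate 3
    have e3 : |∫ t in Ioi (1:ℝ), f r t| ≤ E₃ := by
      rw [← Real.norm_eq_abs]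
      apply norm_integral_le_of_norm_le
        (((exp_neg_integrableOn_Ioi 1 hβ).const_mul M))
      filter_upwards [ae_restrict_mem measurableSet_Ioi] with t ht
      have ht1 : (1:ℝ) < t := ht
      have ht0 : 0 < t := by linarith
      have hrt : r / t ≤ 1 := by rw [div_le_one ht0]; linarith
      have hginv : 0 < g (r / t) := hgpos _ (by positivity)
      rw [Real.norm_eq_abs, abs_of_nonneg (hfnonneg r t hr0.le ht0)]
      have hti : t⁻¹ ≤ 1 := by
        rw [inv_le_one_iff₀]; right; linarith
      calc f r t ≤ Real.exp (-β * t) * 1 * M := by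
            apply mul_le_mul _ (hMb _ (by positivity) hrt) hginv.le (by positivity)
            exact mul_le_mul_of_nonneg_left hti (Real.exp_pos _).le
        _ = M * Real.exp (-β * t) := by ring
    -- estimate 2
    have hlogint : (∫ t in Ioc r 1, (t:ℝ)⁻¹) = Real.log (1 / r) := by
      rw [← intervalIntegral.integral_of_le hr1.le]
      rw [integral_inv]
      intro h
      rw [Set.uIcc_of_le hr1.le] at h
      exact absurd h.1 (by linarith)
    have hnz : ∀ x : ℝ, x ∈ Set.uIcc r (1:ℝ) → x ≠ 0 := by
      intro x hx
      rw [Set.uIcc_of_le hr1.le] at hx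
      exact ne_of_gt (lt_of_lt_of_le hr0 hx.1)
    have hinvint : IntegrableOn (fun t : ℝ => g 0 * t⁻¹) (Ioc r 1) := by
      have : IntervalIntegrable (fun x : ℝ => x⁻¹) volume r 1 :=
        intervalIntegral.intervalIntegrable_inv hnz continuousOn_id
      exact ((intervalIntegrable_iff_integrableOn_Ioc_of_le hr1.le).mp
        (this.const_mul (g 0)))
    have e2 : |(∫ t in Ioc r 1, f r t) - g 0 * Real.log (1 / r)| ≤ β * g 0 + c / 2 := by
      have hsub : (∫ t in Ioc r 1, f r t) - g 0 * Real.log (1 / r)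
          = ∫ t in Ioc r 1, (f r t - g 0 * t⁻¹) := by
        rw [integral_sub ((hI2 r hr0).mono_set Ioc_subset_Ioi_self) hinvint]
        rw [integral_const_mul, hlogint]
      rw [hsub]
      -- the dominating function
      set φ : ℝ → ℝ := fun t => β * g 0 + c * r ^ 2 * t ^ (-3 : ℤ) with hφ
      have hφint : IntervalIntegrable φ volume r 1 :=
        (intervalIntegrable_const).add
          ((intervalIntegral.intervalIntegrable_zpow (Or.inr fun h => hnz 0 h rfl)).const_mul _)
      have hφval : (∫ x in r..1, φ x) ≤ β * g 0 + c / 2 := by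
        rw [hφ]
        rw [intervalIntegral.integral_add intervalIntegrable_const
          ((intervalIntegral.intervalIntegrable_zpow (Or.inr fun h => hnz 0 h rfl)).const_mul _)]
        rw [intervalIntegral.integral_const, intervalIntegral.integral_const_mul,
          integral_zpow (Or.inr ⟨by norm_num, fun h => hnz 0 h rfl⟩)]
        have h1 : ((1:ℝ) - r) • (β * g 0) ≤ β * g 0 := by
          rw [smul_eq_mul]
          nlinarith [mul_pos hβ hg0pos]
        have h2 : c * r ^ 2 * (((1:ℝ) ^ ((-3:ℤ) + 1) - r ^ ((-3:ℤ) + 1)) / ((-3:ℤ) + 1))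
            ≤ c / 2 := by
          have hz : ∀ x : ℝ, x ≠ 0 → x ^ ((-3:ℤ)+1) = (x ^ 2)⁻¹ := by
            intro x hx
            rw [show ((-3:ℤ)+1) = -2 by norm_num, zpow_neg, zpow_two, pow_two]
          rw [hz 1 one_ne_zero, hz r hr0.ne']
          have hr2 : (r:ℝ) ^ 2 ≠ 0 := by positivity
          have heq : c * r ^ 2 * ((((1:ℝ) ^ 2)⁻¹ - (r ^ 2)⁻¹) / ((-3:ℤ) + 1))
              = c * (1 - r ^ 2) / 2 := by
            push_cast
            field_simp
            ring
          rw [heq]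
          nlinarith [sq_nonneg r]
        linarith
      have hbd : ∀ᵐ t ∂(volume.restrict (Ioc r 1)), ‖f r t - g 0 * t⁻¹‖ ≤ φ t := by
        filter_upwards [ae_restrict_mem measurableSet_Ioc] with t ht
        have ht0 : 0 < t := lt_trans hr0 ht.1
        have ht1 : t ≤ 1 := ht.2
        have hexp : Real.exp (-β * t) ≤ 1 := by
          apply Real.exp_le_one_iff.2; nlinarith
        have hab : f r t - g 0 * t⁻¹
            = t⁻¹ * (Real.exp (-β * t) * (g (r / t) - g 0)
              + (Real.exp (-β * t) - 1) * g 0) := by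
          simp only [hf]; ring
        have p1 : |Real.exp (-β * t) * (g (r / t) - g 0)| ≤ c * (r / t) ^ 2 := by
          rw [abs_mul, abs_of_pos (Real.exp_pos _)]
          calc Real.exp (-β * t) * |g (r / t) - g 0|
              ≤ 1 * (c * (r / t) ^ 2) := by
                apply mul_le_mul hexp _ (abs_nonneg _) zero_le_one
                rw [abs_sub_comm]
                exact hg0 (r / t) (by positivity)
            _ = c * (r / t) ^ 2 := one_mul _
        have p2 : |(Real.exp (-β * t) - 1) * g 0| ≤ β * t * g 0 := by
          rw [abs_mul, abs_of_pos hg0pos, abs_of_nonpos (sub_nonpos.2 hexp)]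
          have := Real.add_one_le_exp (-β * t)
          apply mul_le_mul_of_nonneg_right _ hg0pos.le
          linarith
        rw [Real.norm_eq_abs, hab, abs_mul, abs_inv, abs_of_pos ht0]
        calc t⁻¹ * |Real.exp (-β * t) * (g (r / t) - g 0)
              + (Real.exp (-β * t) - 1) * g 0|
            ≤ t⁻¹ * (c * (r / t) ^ 2 + β * t * g 0) := by
              apply mul_le_mul_of_nonneg_left _ (inv_nonneg.2 ht0.le)
              exact (abs_add_le _ _).trans (add_le_add p1 p2)
          _ = β * g 0 + c * r ^ 2 * (t ^ 3)⁻¹ := aux_alg_stmt3 c r β (g 0) t ht0.ne'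
          _ = φ t := by
              simp only [hφ]
              have h3 : t ^ (-3 : ℤ) = (t ^ 3)⁻¹ := by
                rw [zpow_neg]; norm_cast
              rw [h3]
      have := norm_integral_le_of_norm_le (μ := volume.restrict (Ioc r 1))
        ((intervalIntegrable_iff_integrableOn_Ioc_of_le hr1.le).mp hφint) hbd
      rw [Real.norm_eq_abs] at this
      refine this.trans ?_
      rw [← intervalIntegral.integral_of_le hr1.le] at *
      exact hφval
    rw [hsplit1, hsplit2]
    have habs : |(∫ t in Ioc (0:ℝ) r, f r t) + ((∫ t in Ioc r 1, f r t)
        + ∫ t in Ioi (1:ℝ), f r t) - g 0 * Real.log (1 / r)|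
        ≤ |∫ t in Ioc (0:ℝ) r, f r t|
          + |(∫ t in Ioc r 1, f r t) - g 0 * Real.log (1 / r)|
          + |∫ t in Ioi (1:ℝ), f r t| := by
      have := abs_add_le (∫ t in Ioc (0:ℝ) r, f r t)
        ((∫ t in Ioc r 1, f r t) - g 0 * Real.log (1 / r))
      have h2 := abs_add_le ((∫ t in Ioc (0:ℝ) r, f r t) + ((∫ t in Ioc r 1, f r t)
        - g 0 * Real.log (1 / r))) (∫ t in Ioi (1:ℝ), f r t)
      calc |(∫ t in Ioc (0:ℝ) r, f r t) + ((∫ t in Ioc r 1, f r t)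
          + ∫ t in Ioi (1:ℝ), f r t) - g 0 * Real.log (1 / r)|
          = |(∫ t in Ioc (0:ℝ) r, f r t) + ((∫ t in Ioc r 1, f r t)
            - g 0 * Real.log (1 / r)) + ∫ t in Ioi (1:ℝ), f r t| := by congr 1; ring
        _ ≤ _ := by
            refine h2.trans ?_
            linarith [this]
    rw [hB]
    linarith [habs, e1, e2, e3]
  -- the limit
  have hLtop : Tendsto (fun r : ℝ => Real.log (1 / r)) (nhdsWithin 0 (Ioi 0)) atTop := by
    have h0 : Tendsto (fun r : ℝ => 1 / r) (nhdsWithin 0 (Ioi 0)) atTop := by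
      have h1 := (tendsto_inv_nhdsGT_zero :
        Tendsto (fun x : ℝ => x⁻¹) (nhdsWithin 0 (Ioi 0)) atTop)
      exact h1.congr fun x => (one_div x).symm
    exact Real.tendsto_log_atTop.comp h0
  have hmem : Ioo (0:ℝ) 1 ∈ nhdsWithin (0:ℝ) (Ioi 0) :=
    Ioo_mem_nhdsGT_of_mem ⟨le_refl 0, one_pos⟩
  have hlogpos : ∀ᶠ r in nhdsWithin (0:ℝ) (Ioi 0), 0 < Real.log (1 / r) :=
    hLtop.eventually (eventually_gt_atTop 0)
  have hz : Tendsto (fun r : ℝ =>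
      ((∫ t in Ioi (0:ℝ), f r t) - g 0 * Real.log (1 / r)) / Real.log (1 / r))
      (nhdsWithin 0 (Ioi 0)) (nhds 0) := by
    apply squeeze_zero_norm' (a := fun r : ℝ => B * (Real.log (1 / r))⁻¹)
    · filter_upwards [hmem, hlogpos] with r hr hlr
      rw [Real.norm_eq_abs, abs_div, abs_of_pos hlr, div_eq_mul_inv]
      exact mul_le_mul_of_nonneg_right (key r hr) (inv_nonneg.2 hlr.le)
    · have h9 : Tendsto (fun r : ℝ => (Real.log (1 / r))⁻¹)
          (nhdsWithin 0 (Ioi 0)) (nhds 0) := hLtop.inv_tendsto_atTop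
      simpa using h9.const_mul B
  have hfin : Tendsto (fun r : ℝ => g 0 +
      ((∫ t in Ioi (0:ℝ), f r t) - g 0 * Real.log (1 / r)) / Real.log (1 / r))
      (nhdsWithin 0 (Ioi 0)) (nhds (g 0)) := by
    simpa using hz.const_add (g 0)
  apply hfin.congr'
  filter_upwards [hmem, hlogpos] with r hr hlr
  have hne : Real.log (1 / r) ≠ 0 := hlr.ne'
  show g 0 + _ = _
  rw [eq_div_iff hne, add_mul, div_mul_cancel₀ _ hne]
  ring
end

section
/- Let λ < 0, α > 0, d ≥ 1, M > 0, and let g : (0,∞) → (0,∞) be continuous with sup_r r^{d+α} g(r) < ∞. Let R : (0,∞) → (0,∞) satisfy R(t)/t^{1/α} → ∞ as t → ∞ and R(t) ≥ 2M. Define J(t) = e^{−λt} (R(t)−M)^d ∫_{t^{1/α}}^∞ e^{λ u^α} g((R(t)−M)/u) u^{−d−1} du. Then there exist c > 0 and T > 0 such that J(t) ≤ c / R(t)^α for all t ≥ T. -/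
open MeasureTheory Filter Real Set

lemma aux_int (l α a : ℝ) (hl : l < 0) (hα : 0 < α) (ha : 0 < a) :
    IntegrableOn (fun u : ℝ => Real.exp (l * u ^ α) * u ^ (α - 1)) (Ioi a) ∧
    ∫ u in Ioi a, Real.exp (l * u ^ α) * u ^ (α - 1) =
      Real.exp (l * a ^ α) / (-(l * α)) := by
  have hlα : l * α ≠ 0 := (mul_neg_of_neg_of_pos hl hα).ne
  set f : ℝ → ℝ := fun u => Real.exp (l * u ^ α) / (l * α) with hf
  have hderiv : ∀ x ∈ Ioi a, HasDerivAt f (Real.exp (l * x ^ α) * x ^ (α - 1)) x := by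
    intro x hx
    have hx0 : x ≠ 0 := (ha.trans hx).ne'
    have h1 : HasDerivAt (fun u : ℝ => u ^ α) (α * x ^ (α - 1)) x :=
      Real.hasDerivAt_rpow_const (Or.inl hx0)
    have h2 := ((h1.const_mul l).exp).div_const (l * α)
    convert h2 using 1
    case e'_4 => rfl
    case e'_5 => rfl
    rw [eq_div_iff hlα]
    ring
  have hnonneg : ∀ x ∈ Ioi a, 0 ≤ Real.exp (l * x ^ α) * x ^ (α - 1) := by
    intro x hx
    have hx0 : (0:ℝ) ≤ x := (ha.trans hx).le
    positivity
  have hcont : ContinuousOn f (Ici a) := by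
    apply ContinuousOn.div_const
    apply Real.continuous_exp.comp_continuousOn
    exact continuousOn_const.mul (ContinuousOn.rpow_const continuousOn_id
      (fun x hx => Or.inl (ha.trans_le hx).ne'))
  have hlim : Tendsto f atTop (nhds 0) := by
    have h1 : Tendsto (fun u : ℝ => l * u ^ α) atTop atBot :=
      (tendsto_const_mul_atBot_of_neg hl).2 (tendsto_rpow_atTop hα)
    have h2 := (Real.tendsto_exp_atBot.comp h1).div_const (l * α)
    simpa using h2
  have hcwa : ContinuousWithinAt f (Ici a) a := hcont a self_mem_Ici
  refine ⟨integrableOn_Ioi_deriv_of_nonneg hcwa hderiv hnonneg hlim, ?_⟩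
  rw [integral_Ioi_of_hasDerivAt_of_nonneg hcwa hderiv hnonneg hlim]
  simp only [hf, zero_sub, div_neg, neg_div]

theorem stmt_14 (d : ℕ) (hd : 1 ≤ d) (α : ℝ) (hα : 0 < α)
    (l : ℝ) (hl : l < 0) (M : ℝ) (hM : 0 < M)
    (g : ℝ → ℝ) (hg : Continuous g) (hgpos : ∀ r > (0 : ℝ), 0 < g r)
    (hgbd : ∃ B : ℝ, ∀ r > (0 : ℝ), r ^ ((d : ℝ) + α) * g r ≤ B)
    (R : ℝ → ℝ) (hRM : ∀ t > (0 : ℝ), 2 * M ≤ R t)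
    (hR : Tendsto (fun t : ℝ => R t / t ^ (1 / α)) atTop atTop)
    (J : ℝ → ℝ)
    (hJ : ∀ t : ℝ, J t =
      Real.exp (-l * t) * (R t - M) ^ (d : ℕ) *
        ∫ u in Ioi (t ^ (1 / α)),
          Real.exp (l * u ^ α) * g ((R t - M) / u) * u ^ (-(d : ℝ) - 1)) :
    ∃ c > (0 : ℝ), ∃ T > (0 : ℝ), ∀ t : ℝ, T ≤ t → J t ≤ c / R t ^ α := by
  obtain ⟨B, hB⟩ := hgbd
  have hB0 : 0 < B := by
    have h2 := hB 1 one_pos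
    have h1 : (0:ℝ) < g 1 := hgpos 1 one_pos
    rw [Real.one_rpow, one_mul] at h2
    exact h1.trans_le h2
  have hK : (0:ℝ) < -(l * α) := neg_pos.2 (mul_neg_of_neg_of_pos hl hα)
  refine ⟨B * 2 ^ α / (-(l * α)), div_pos (by positivity) hK, 1, one_pos, fun t ht => ?_⟩
  have ht0 : (0:ℝ) < t := lt_of_lt_of_le one_pos ht
  set a : ℝ := t ^ (1 / α) with ha_def
  have ha : 0 < a := Real.rpow_pos_of_pos ht0 _
  set b : ℝ := R t - M with hb_def
  have hRt : 2 * M ≤ R t := hRM t ht0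
  have hb : 0 < b := by
    have : M ≤ R t - M := by linarith
    linarith
  have hR2 : R t / 2 ≤ b := by
    have h0 : M ≤ R t / 2 := by linarith
    simp only [hb_def]; linarith
  have hRpos : 0 < R t := by linarith
  -- pointwise bound on Ioi a
  have hpt : ∀ u ∈ Ioi a,
      Real.exp (l * u ^ α) * g (b / u) * u ^ (-(d : ℝ) - 1) ≤
      B * b ^ (-((d:ℝ) + α)) * (Real.exp (l * u ^ α) * u ^ (α - 1)) := by
    intro u hu
    have hu0 : 0 < u := ha.trans hu
    have hbu : 0 < b / u := div_pos hb hu0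
    have hgle : g (b / u) ≤ B * (b / u) ^ (-((d:ℝ) + α)) := by
      have h1 := hB (b / u) hbu
      have h2 : (0:ℝ) < (b / u) ^ ((d:ℝ) + α) := Real.rpow_pos_of_pos hbu _
      rw [Real.rpow_neg hbu.le, mul_comm B]
      have h3 : g (b / u) ≤ B / (b / u) ^ ((d:ℝ) + α) :=
        (le_div_iff₀ h2).2 (by rw [mul_comm]; exact h1)
      rw [← div_eq_inv_mul]; exact h3
    have key : (b / u) ^ (-((d:ℝ) + α)) * u ^ (-(d : ℝ) - 1) =
        b ^ (-((d:ℝ) + α)) * u ^ (α - 1) := by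
      rw [Real.div_rpow hb.le hu0.le, div_mul_eq_mul_div, div_eq_mul_inv,
        mul_assoc, ← Real.rpow_neg hu0.le, ← Real.rpow_add hu0]
      ring_nf
    calc Real.exp (l * u ^ α) * g (b / u) * u ^ (-(d : ℝ) - 1)
        ≤ Real.exp (l * u ^ α) * (B * (b / u) ^ (-((d:ℝ) + α))) * u ^ (-(d : ℝ) - 1) := by
          apply mul_le_mul_of_nonneg_right _ (Real.rpow_nonneg hu0.le _)
          exact mul_le_mul_of_nonneg_left hgle (Real.exp_pos _).le
      _ = B * b ^ (-((d:ℝ) + α)) * (Real.exp (l * u ^ α) * u ^ (α - 1)) := by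
          rw [mul_assoc (Real.exp _), mul_assoc B, mul_assoc, key]; ring
  obtain ⟨hint, hval⟩ := aux_int l α a hl hα ha
  have hintR : IntegrableOn
      (fun u : ℝ => B * b ^ (-((d:ℝ) + α)) * (Real.exp (l * u ^ α) * u ^ (α - 1)))
      (Ioi a) := hint.const_mul _
  -- measurability of LHS
  have hmeasL : AEStronglyMeasurable
      (fun u : ℝ => Real.exp (l * u ^ α) * g (b / u) * u ^ (-(d : ℝ) - 1))
      (volume.restrict (Ioi a)) := by
    apply ContinuousOn.aestronglyMeasurable _ measurableSet_Ioi
    have h1 : ContinuousOn (fun u : ℝ => u ^ α) (Ioi a) :=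
      ContinuousOn.rpow_const continuousOn_id (fun x hx => Or.inl (ha.trans hx).ne')
    have h2 : ContinuousOn (fun u : ℝ => Real.exp (l * u ^ α)) (Ioi a) :=
      Real.continuous_exp.comp_continuousOn (continuousOn_const.mul h1)
    have h3 : ContinuousOn (fun u : ℝ => g (b / u)) (Ioi a) := by
      apply hg.comp_continuousOn
      exact continuousOn_const.div continuousOn_id (fun x hx => (ha.trans hx).ne')
    have h4 : ContinuousOn (fun u : ℝ => u ^ (-(d : ℝ) - 1)) (Ioi a) :=
      ContinuousOn.rpow_const continuousOn_id (fun x hx => Or.inl (ha.trans hx).ne')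
    exact (h2.mul h3).mul h4
  have hnonnegL : ∀ u ∈ Ioi a,
      0 ≤ Real.exp (l * u ^ α) * g (b / u) * u ^ (-(d : ℝ) - 1) := by
    intro u hu
    have hu0 : 0 < u := ha.trans hu
    have := hgpos (b / u) (div_pos hb hu0)
    positivity
  have hintL : IntegrableOn
      (fun u : ℝ => Real.exp (l * u ^ α) * g (b / u) * u ^ (-(d : ℝ) - 1)) (Ioi a) := by
    apply hintR.mono' hmeasL
    filter_upwards [ae_restrict_mem measurableSet_Ioi] with u hu
    rw [Real.norm_eq_abs, abs_of_nonneg (hnonnegL u hu)]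
    exact hpt u hu
  have hmono : (∫ u in Ioi a, Real.exp (l * u ^ α) * g (b / u) * u ^ (-(d : ℝ) - 1)) ≤
      ∫ u in Ioi a, B * b ^ (-((d:ℝ) + α)) * (Real.exp (l * u ^ α) * u ^ (α - 1)) :=
    setIntegral_mono_on hintL hintR measurableSet_Ioi hpt
  have haα : a ^ α = t := by
    rw [ha_def, ← Real.rpow_mul ht0.le, one_div_mul_cancel hα.ne', Real.rpow_one]
  have hI : (∫ u in Ioi a, B * b ^ (-((d:ℝ) + α)) * (Real.exp (l * u ^ α) * u ^ (α - 1)))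
      = B * b ^ (-((d:ℝ) + α)) * (Real.exp (l * t) / (-(l * α))) := by
    rw [MeasureTheory.integral_const_mul, hval, haα]
  have hJt : J t = Real.exp (-l * t) * b ^ d *
      ∫ u in Ioi a, Real.exp (l * u ^ α) * g (b / u) * u ^ (-(d : ℝ) - 1) := hJ t
  have hbRα : b ^ (-α) ≤ 2 ^ α / R t ^ α := by
    have h1 : (R t / 2) ^ α ≤ b ^ α := Real.rpow_le_rpow (by positivity) hR2 hα.le
    have h2 : (0:ℝ) < (R t / 2) ^ α := Real.rpow_pos_of_pos (by positivity) _
    have h3 : (b ^ α)⁻¹ ≤ ((R t / 2) ^ α)⁻¹ := inv_anti₀ h2 h1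
    rw [Real.rpow_neg hb.le]
    calc (b ^ α)⁻¹ ≤ ((R t / 2) ^ α)⁻¹ := h3
      _ = 2 ^ α / R t ^ α := by
          rw [Real.div_rpow hRpos.le (by norm_num : (0:ℝ) ≤ 2), inv_div]
  calc J t ≤ Real.exp (-l * t) * b ^ d *
        (B * b ^ (-((d:ℝ) + α)) * (Real.exp (l * t) / (-(l * α)))) := by
        rw [hJt]
        exact mul_le_mul_of_nonneg_left (hmono.trans_eq hI) (by positivity)
    _ = B / (-(l * α)) * (b ^ d * b ^ (-((d:ℝ) + α))) := by
        have he : Real.exp (-l * t) * Real.exp (l * t) = 1 := by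
          rw [← Real.exp_add]; simp
        rw [show Real.exp (-l * t) * b ^ d *
            (B * b ^ (-((d:ℝ) + α)) * (Real.exp (l * t) / (-(l * α)))) =
            (Real.exp (-l * t) * Real.exp (l * t)) *
              (B / (-(l * α)) * (b ^ d * b ^ (-((d:ℝ) + α)))) from by ring, he, one_mul]
    _ = B / (-(l * α)) * b ^ (-α) := by
        rw [← Real.rpow_natCast b d, ← Real.rpow_add hb]
        ring_nf
    _ ≤ B / (-(l * α)) * (2 ^ α / R t ^ α) :=
        mul_le_mul_of_nonneg_left hbRα (by positivity)
    _ = B * 2 ^ α / (-(l * α)) / R t ^ α := by ring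
end
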